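/- arXiv:math/0404400 — 3 statements merged into one kernel-verified Lean document; each statement's English description precedes it below -/
import Mathlib

section
/- Let p be a prime and let E(t) = exp(∑_{i=0}^∞ t^{p^i}/p^i) be the Artin-Hasse exponential series. Then E(t) has all coefficients in the p-adic integers Z_p. -/
noncomputable def expOf {R : Type*} [CommRing R] [Algebra ℚ R] (f : PowerSeries R) :
    PowerSeries R :=
  PowerSeries.mk fun n => ∑ k ∈ Finset.range (n + 1),
    algebraMap ℚ R (1 / (k.factorial : ℚ)) * PowerSeries.coeff n (f ^ k)

open scoped Classical in
/-- The logarithm of the Artin–Hasse series: `∑_{i≥0} t^{p^i}/p^i`. -/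
noncomputable def AHlog (p : ℕ) (R : Type*) [CommRing R] [Algebra ℚ R] : PowerSeries R :=
  PowerSeries.mk fun n =>
    if h : ∃ i : ℕ, n = p ^ i then algebraMap ℚ R (((p : ℚ) ^ h.choose)⁻¹) else 0

/-- The Artin–Hasse exponential series `E(t) = exp(∑_{i≥0} t^{p^i}/p^i)`. -/
noncomputable def AH (p : ℕ) (R : Type*) [CommRing R] [Algebra ℚ R] : PowerSeries R :=
  expOf (AHlog p R)

/-- `ord_p`, the `p`-adic valuation attached to the norm, normalized by `ordp p p = 1`. -/
noncomputable def ordp (p : ℕ) {K : Type*} [NormedField K] (x : K) : ℝ :=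
  -Real.logb p ‖x‖

/-- Evaluation of the Artin–Hasse series at an element of a normed `ℚ_p`-algebra. -/
noncomputable def AHeval (p : ℕ) [Fact p.Prime] {K : Type*} [NormedField K]
    [Algebra ℚ_[p] K] (x : K) : K :=
  ∑' n : ℕ, algebraMap ℚ_[p] K (PowerSeries.coeff n (AH p ℚ_[p])) * x ^ n

open PowerSeries Finset

section general
set_option linter.unusedSectionVars false
variable {R : Type*} [CommRing R] [Algebra ℚ R]

lemma coeff_expOf (f : PowerSeries R) (n : ℕ) :
    coeff n (expOf f) = ∑ k ∈ range (n + 1),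
      algebraMap ℚ R (1 / (k.factorial : ℚ)) * coeff n (f ^ k) := coeff_mk _ _

lemma coeff_pow_eq_zero' {f : PowerSeries R} (hf : constantCoeff f = 0)
    {k n : ℕ} (h : n < k) : coeff n (f ^ k) = 0 := by
  have hd : (X : PowerSeries R) ^ k ∣ f ^ k := pow_dvd_pow_of_dvd (X_dvd_iff.mpr hf) k
  exact (X_pow_dvd_iff.mp hd) n h

lemma coeff_mul_pow_eq_zero' {f g : PowerSeries R} (hf : constantCoeff f = 0)
    (hg : constantCoeff g = 0) {j k n : ℕ} (h : n < j + k) :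
    coeff n (f ^ j * g ^ k) = 0 := by
  have hd : (X : PowerSeries R) ^ (j + k) ∣ f ^ j * g ^ k := by
    rw [pow_add]
    exact mul_dvd_mul (pow_dvd_pow_of_dvd (X_dvd_iff.mpr hf) j)
      (pow_dvd_pow_of_dvd (X_dvd_iff.mpr hg) k)
  exact (X_pow_dvd_iff.mp hd) n h

lemma cfac_mul_choose (m k : ℕ) (hk : k ≤ m) :
    algebraMap ℚ R (1 / (m.factorial : ℚ)) * (m.choose k : R) =
      algebraMap ℚ R (1 / (k.factorial : ℚ)) * algebraMap ℚ R (1 / ((m - k).factorial : ℚ)) := by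
  have h := Nat.choose_mul_factorial_mul_factorial hk
  have h2 : (m.choose k : ℚ) * k.factorial * (m - k).factorial = m.factorial := by
    exact_mod_cast congrArg (Nat.cast : ℕ → ℚ) h
  have : (m.choose k : R) = algebraMap ℚ R (m.choose k : ℚ) := by simp
  rw [this, ← map_mul, ← map_mul]
  congr 1
  have hk0 : (k.factorial : ℚ) ≠ 0 := Nat.cast_ne_zero.mpr k.factorial_ne_zero
  have hmk0 : ((m - k).factorial : ℚ) ≠ 0 := Nat.cast_ne_zero.mpr (m - k).factorial_ne_zero
  have hm0 : (m.factorial : ℚ) ≠ 0 := Nat.cast_ne_zero.mpr m.factorial_ne_zero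
  field_simp
  linarith [h2]

lemma expOf_add {f g : PowerSeries R} (hf : constantCoeff f = 0)
    (hg : constantCoeff g = 0) : expOf (f + g) = expOf f * expOf g := by
  ext n
  set c : ℕ → R := fun k => algebraMap ℚ R (1 / (k.factorial : ℚ)) with hc
  set T : ℕ × ℕ → R := fun q => c q.1 * c q.2 * coeff n (f ^ q.1 * g ^ q.2) with hT
  have square : ∀ q ∈ range (n+1) ×ˢ range (n+1), q ∉ (range (n+1)).biUnion Finset.HasAntidiagonal.antidiagonal
      → T q = 0 := by
    intro q _ hq2
    have : ¬ (q.1 + q.2 ≤ n) := by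
      intro hle
      exact hq2 (Finset.mem_biUnion.mpr ⟨q.1 + q.2, Finset.mem_range.mpr (by omega),
        Finset.HasAntidiagonal.mem_antidiagonal.mpr rfl⟩)
    exact mul_eq_zero_of_right _ (coeff_mul_pow_eq_zero' hf hg (by omega))
  have hsub : ((range (n+1)).biUnion Finset.HasAntidiagonal.antidiagonal : Finset (ℕ×ℕ)) ⊆
      range (n+1) ×ˢ range (n+1) := by
    intro q hq
    simp only [Finset.mem_biUnion, Finset.mem_range, Finset.HasAntidiagonal.mem_antidiagonal] at hq
    obtain ⟨m, hm, hq⟩ := hq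
    simp only [Finset.mem_product, Finset.mem_range]
    omega
  -- LHS
  have lhs : coeff n (expOf (f + g)) = ∑ q ∈ (range (n+1)).biUnion Finset.HasAntidiagonal.antidiagonal, T q := by
    rw [coeff_expOf]
    rw [Finset.sum_biUnion (by
      intro x hx y hy hxy
      apply Finset.disjoint_left.mpr
      intro q hq hq'
      exact hxy (by rw [← Finset.HasAntidiagonal.mem_antidiagonal.mp hq, Finset.HasAntidiagonal.mem_antidiagonal.mp hq']))]
    refine Finset.sum_congr rfl fun m hm => ?_
    rw [Finset.Nat.sum_antidiagonal_eq_sum_range_succ_mk]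
    rw [add_pow, map_sum, Finset.mul_sum]
    refine Finset.sum_congr rfl fun k hk => ?_
    simp only [hT]
    have hcast : ((m.choose k : ℕ) : R⟦X⟧) = C ((m.choose k : ℕ) : R) := by
      rw [map_natCast]
    rw [hcast, coeff_mul_C]
    have key := cfac_mul_choose (R := R) m k (Nat.lt_succ_iff.mp (Finset.mem_range.mp hk))
    simp only [hc]
    linear_combination (coeff n (f ^ k * g ^ (m - k))) * key
  -- RHS
  have rhs : coeff n (expOf f * expOf g) = ∑ q ∈ range (n+1) ×ˢ range (n+1), T q := by
    rw [coeff_mul]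
    have step : ∀ q ∈ Finset.HasAntidiagonal.antidiagonal n, (coeff q.1 (expOf f)) * (coeff q.2 (expOf g)) =
        ∑ j ∈ range (n+1), ∑ k ∈ range (n+1),
          (c j * coeff q.1 (f ^ j)) * (c k * coeff q.2 (g ^ k)) := by
      intro q hq
      have hq1 : q.1 ≤ n := by
        have := Finset.HasAntidiagonal.mem_antidiagonal.mp hq; omega
      have hq2 : q.2 ≤ n := by
        have := Finset.HasAntidiagonal.mem_antidiagonal.mp hq; omega
      rw [coeff_expOf, coeff_expOf]
      rw [Finset.sum_subset (Finset.range_subset_range.mpr (by omega : q.1 + 1 ≤ n + 1))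
        (fun j _ hj => by
          rw [coeff_pow_eq_zero' hf (by simp at hj ⊢; omega), mul_zero])]
      rw [Finset.sum_subset (Finset.range_subset_range.mpr (by omega : q.2 + 1 ≤ n + 1))
        (fun k _ hk => by
          rw [coeff_pow_eq_zero' hg (by simp at hk ⊢; omega), mul_zero])]
      rw [Finset.sum_mul_sum]
    rw [Finset.sum_congr rfl step, Finset.sum_comm]
    rw [Finset.sum_product]
    refine Finset.sum_congr rfl fun j _ => ?_
    rw [Finset.sum_comm]
    refine Finset.sum_congr rfl fun k _ => ?_
    simp only [hT]
    rw [coeff_mul, Finset.mul_sum]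
    refine Finset.sum_congr rfl fun q hq => ?_
    ring
  rw [lhs, rhs]
  exact Finset.sum_subset hsub square
lemma expOf_zero : expOf (0 : PowerSeries R) = 1 := by
  ext n
  rw [coeff_expOf]
  rcases Nat.eq_zero_or_pos n with h | h
  · subst h; simp
  · rw [Finset.sum_eq_zero, PowerSeries.coeff_one, if_neg (by omega)]
    intro k hk
    rcases Nat.eq_zero_or_pos k with hk0 | hk0
    · subst hk0
      rw [pow_zero, PowerSeries.coeff_one, if_neg (by omega), mul_zero]
    · rw [zero_pow (by omega), map_zero, mul_zero]

lemma constantCoeff_expOf {f : PowerSeries R} (hf : constantCoeff f = 0) :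
    constantCoeff (expOf f) = 1 := by
  rw [← PowerSeries.coeff_zero_eq_constantCoeff_apply, coeff_expOf]
  simp

lemma expOf_nsmul {f : PowerSeries R} (hf : constantCoeff f = 0) (m : ℕ) :
    expOf (m • f) = expOf f ^ m := by
  induction m with
  | zero => simpa using expOf_zero
  | succ k ih =>
      rw [succ_nsmul, expOf_add (by simp [hf]) hf, ih, pow_succ]

section psi
variable (p : ℕ)

noncomputable def psi (f : PowerSeries R) : PowerSeries R :=
  PowerSeries.mk fun n => if p ∣ n then coeff (n / p) f else 0

lemma coeff_psi (f : PowerSeries R) (n : ℕ) :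
    coeff n (psi p f) = if p ∣ n then coeff (n / p) f else 0 := coeff_mk _ _

lemma psi_one (hp : 0 < p) : psi p (1 : PowerSeries R) = 1 := by
  ext n
  rw [coeff_psi]
  rcases Nat.eq_zero_or_pos n with h | h
  · subst h; simp
  · rw [show (coeff n) (1 : R⟦X⟧) = 0 by
      rw [PowerSeries.coeff_one, if_neg (show ¬ n = 0 by omega)]]
    by_cases hn : p ∣ n
    · obtain ⟨c, rfl⟩ := hn
      rw [if_pos ⟨c, rfl⟩, Nat.mul_div_cancel_left c hp, PowerSeries.coeff_one,
        if_neg (by rintro rfl; simp at h)]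
    · rw [if_neg hn]

lemma psi_mul (hp : 0 < p) (f g : PowerSeries R) : psi p (f * g) = psi p f * psi p g := by
  ext n
  rw [coeff_psi]
  by_cases hn : p ∣ n
  · obtain ⟨m, rfl⟩ := hn
    rw [if_pos ⟨m, rfl⟩, Nat.mul_div_cancel_left m hp, PowerSeries.coeff_mul,
      PowerSeries.coeff_mul]
    rw [← Finset.sum_filter_of_ne (s := Finset.HasAntidiagonal.antidiagonal (p * m))
      (p := fun q => p ∣ q.1)
      (f := fun q => (coeff q.1 (psi p f)) * (coeff q.2 (psi p g)))
      (by
        intro q hq hne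
        by_contra hq1
        exact hne (show (coeff q.1) (psi p f) * (coeff q.2) (psi p g) = 0 by
          rw [coeff_psi, if_neg hq1, zero_mul]))]
    refine Finset.sum_nbij' (i := fun q => (p * q.1, p * q.2)) (j := fun q => (q.1 / p, q.2 / p))
      ?_ ?_ ?_ ?_ ?_
    · intro q hq
      have hs := Finset.HasAntidiagonal.mem_antidiagonal.mp hq
      simp only [Finset.mem_filter, Finset.HasAntidiagonal.mem_antidiagonal]
      exact ⟨by rw [← Nat.mul_add, hs], ⟨q.1, rfl⟩⟩
    · intro q hq
      simp only [Finset.mem_filter, Finset.HasAntidiagonal.mem_antidiagonal] at hq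
      obtain ⟨hsum, a, ha⟩ := hq
      have ham : a ≤ m := Nat.le_of_mul_le_mul_left (by omega) hp
      have h2 : q.2 = p * (m - a) := by
        have : p * a + p * (m - a) = p * m := by rw [← Nat.mul_add]; congr 1; omega
        omega
      simp only [Finset.HasAntidiagonal.mem_antidiagonal, ha, h2, Nat.mul_div_cancel_left _ hp]
      omega
    · intro q hq
      simp [Nat.mul_div_cancel_left _ hp]
    · intro q hq
      simp only [Finset.mem_filter, Finset.HasAntidiagonal.mem_antidiagonal] at hq
      obtain ⟨hsum, a, ha⟩ := hq
      have ham : a ≤ m := Nat.le_of_mul_le_mul_left (by omega) hp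
      have h2 : q.2 = p * (m - a) := by
        have : p * a + p * (m - a) = p * m := by rw [← Nat.mul_add]; congr 1; omega
        omega
      show (p * (q.1 / p), p * (q.2 / p)) = q
      rw [ha, h2, Nat.mul_div_cancel_left _ hp, Nat.mul_div_cancel_left _ hp, ← ha, ← h2]
    · intro q hq
      simp only [coeff_psi, Nat.mul_div_cancel_left _ hp, if_pos (Dvd.intro _ rfl)]
  · rw [if_neg hn, PowerSeries.coeff_mul]
    symm
    apply Finset.sum_eq_zero
    intro q hq
    have hsum := Finset.HasAntidiagonal.mem_antidiagonal.mp hq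
    by_cases h1 : p ∣ q.1
    · have h2 : ¬ p ∣ q.2 := by
        intro h2; exact hn (by rw [← hsum]; exact Nat.dvd_add h1 h2)
      rw [coeff_psi p g, if_neg h2, mul_zero]
    · rw [coeff_psi, if_neg h1, zero_mul]

lemma psi_pow (hp : 0 < p) (f : PowerSeries R) (k : ℕ) : psi p (f ^ k) = (psi p f) ^ k := by
  induction k with
  | zero => simpa using psi_one p hp
  | succ j ih => rw [pow_succ, psi_mul p hp, ih, pow_succ]

lemma constantCoeff_psi (f : PowerSeries R) :
    constantCoeff (psi p f) = constantCoeff f := by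
  rw [← PowerSeries.coeff_zero_eq_constantCoeff_apply, coeff_psi,
    if_pos (dvd_zero p), Nat.zero_div, PowerSeries.coeff_zero_eq_constantCoeff_apply]

lemma expOf_psi (hp : 0 < p) {f : PowerSeries R} (hf : constantCoeff f = 0) :
    expOf (psi p f) = psi p (expOf f) := by
  ext n
  rw [coeff_expOf, coeff_psi]
  have hterm : ∀ k, coeff n ((psi p f) ^ k) = if p ∣ n then coeff (n / p) (f ^ k) else 0 := by
    intro k
    rw [← psi_pow p hp, coeff_psi]
  by_cases hn : p ∣ n
  · simp only [hterm, if_pos hn]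
    rw [coeff_expOf]
    symm
    apply Finset.sum_subset (Finset.range_subset_range.mpr (by
      have := Nat.div_le_self n p; omega))
    intro k hk hk2
    rw [coeff_pow_eq_zero' hf (by simp at hk2 ⊢; omega), mul_zero]
  · simp only [hterm, if_neg hn]
    simp

end psi
lemma coeff_expOf_C_mul_X (c : R) (n : ℕ) :
    coeff n (expOf (C c * X)) = algebraMap ℚ R (1 / (n.factorial : ℚ)) * c ^ n := by
  rw [coeff_expOf]
  have hterm : ∀ k, coeff n ((C c * X) ^ k) = if n = k then c ^ k else 0 := by
    intro k
    rw [mul_pow, ← map_pow, coeff_C_mul, coeff_X_pow]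
    split_ifs <;> simp
  simp only [hterm]
  rw [Finset.sum_eq_single_of_mem n (Finset.self_mem_range_succ n)
    (fun k _ hk => by rw [if_neg (Ne.symm hk), mul_zero]), if_pos rfl]

end general

section AHsec
variable {R : Type*} [CommRing R] [Algebra ℚ R]
variable (p : ℕ) (hp : 1 < p)

lemma coeff_AHlog_of_not {n : ℕ} (h : ¬ ∃ i : ℕ, n = p ^ i) :
    coeff n (AHlog p R) = 0 := by
  rw [AHlog, coeff_mk, dif_neg h]

include hp in
lemma coeff_AHlog_pow (i : ℕ) :
    coeff (p ^ i) (AHlog p R) = algebraMap ℚ R (((p : ℚ) ^ i)⁻¹) := by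
  rw [AHlog, coeff_mk, dif_pos (⟨i, rfl⟩ : ∃ j : ℕ, p ^ i = p ^ j)]
  rw [show (⟨i, rfl⟩ : ∃ j : ℕ, p ^ i = p ^ j).choose = i from
    (Nat.pow_right_injective hp (⟨i, rfl⟩ : ∃ j : ℕ, p ^ i = p ^ j).choose_spec).symm]

include hp in
lemma constantCoeff_AHlog : constantCoeff (AHlog p R) = 0 := by
  rw [← PowerSeries.coeff_zero_eq_constantCoeff_apply]
  apply coeff_AHlog_of_not
  rintro ⟨i, hi⟩
  have : 0 < p ^ i := Nat.pow_pos (by omega)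
  omega

include hp in
lemma AHlog_decomp :
    (p : ℕ) • AHlog p R = psi p (AHlog p R) + C (algebraMap ℚ R (p : ℚ)) * X := by
  have hp0 : 0 < p := by omega
  ext n
  rw [map_nsmul, map_add, coeff_psi, coeff_C_mul, PowerSeries.coeff_X, nsmul_eq_mul]
  by_cases h : ∃ i : ℕ, n = p ^ i
  · obtain ⟨i, rfl⟩ := h
    cases i with
    | zero =>
      rw [coeff_AHlog_pow p hp 0, pow_zero,
        if_neg (fun hd => by have := Nat.le_of_dvd one_pos hd; omega),
        if_pos (pow_zero p), mul_one, zero_add]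
      rw [show ((p : R)) = algebraMap ℚ R (p : ℚ) by simp]
      rw [← map_mul]
      congr 1
      simp
    | succ j =>
      have hdvd : p ∣ p ^ (j + 1) := ⟨p ^ j, by ring⟩
      have hdiv : p ^ (j + 1) / p = p ^ j := by
        rw [pow_succ, Nat.mul_div_cancel _ hp0]
      rw [if_pos hdvd, hdiv, if_neg (by
          have : 2 ≤ p ^ (j+1) := le_trans hp (Nat.le_self_pow (by omega) p)
          omega),
        mul_zero, add_zero, coeff_AHlog_pow p hp (j + 1), coeff_AHlog_pow p hp j]
      rw [show ((p : R)) = algebraMap ℚ R (p : ℚ) by simp]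
      rw [← map_mul]
      congr 1
      have hpQ : (p : ℚ) ≠ 0 := by positivity
      field_simp
      ring
  · rw [coeff_AHlog_of_not p h, mul_zero]
    have hx : ¬ n = 1 := by rintro rfl; exact h ⟨0, by simp⟩
    by_cases hd : p ∣ n
    · obtain ⟨m, rfl⟩ := hd
      rw [if_pos ⟨m, rfl⟩, Nat.mul_div_cancel_left m hp0]
      rw [coeff_AHlog_of_not p (by rintro ⟨i, rfl⟩; exact h ⟨i + 1, by ring⟩),
        if_neg hx, mul_zero, add_zero]
    · rw [if_neg hd, if_neg hx, mul_zero, add_zero]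

include hp in
lemma constantCoeff_AH_aux : constantCoeff (AH p R) = 1 := by
  unfold AH
  exact constantCoeff_expOf (constantCoeff_AHlog p hp)

include hp in
lemma AH_functional_eq :
    (AH p R) ^ p = psi p (AH p R) * expOf (C (algebraMap ℚ R (p : ℚ)) * X) := by
  have hp0 : 0 < p := by omega
  have hL : constantCoeff (AHlog p R) = 0 := constantCoeff_AHlog p hp
  unfold AH
  rw [← expOf_nsmul hL, AHlog_decomp p hp,
    expOf_add (by rw [constantCoeff_psi]; exact hL) (by simp),
    expOf_psi p hp0 hL]

include hp in
lemma coeff_AH_pow_p (n : ℕ) :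
    coeff n ((AH p R) ^ p) = ∑ q ∈ Finset.HasAntidiagonal.antidiagonal n,
      (if p ∣ q.1 then coeff (q.1 / p) (AH p R) else 0) *
        (algebraMap ℚ R (1 / (q.2.factorial : ℚ)) * (algebraMap ℚ R (p : ℚ)) ^ q.2) := by
  rw [AH_functional_eq p hp, PowerSeries.coeff_mul]
  refine Finset.sum_congr rfl fun q _ => ?_
  rw [coeff_psi, coeff_expOf_C_mul_X]

end AHsec

section padic
variable (p : ℕ) [hp : Fact p.Prime]

lemma padicValNat_factorial_succ_le {b : ℕ} (hb : 1 ≤ b) :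
    padicValNat p b.factorial + 1 ≤ b := by
  have key := sub_one_mul_padicValNat_factorial (p := p) b
  have hplt : 1 < p := hp.out.one_lt
  have hs : 1 ≤ (p.digits b).sum := by
    by_contra hcon
    have h0 : (p.digits b).sum = 0 := by omega
    have hall := List.sum_eq_zero_iff.mp h0
    have hne : p.digits b ≠ [] := Nat.digits_ne_nil_iff_ne_zero.mpr (by omega)
    exact Nat.getLast_digit_ne_zero p (show b ≠ 0 by omega) (hall _ (List.getLast_mem hne))
  have hv : padicValNat p b.factorial ≤ (p - 1) * padicValNat p b.factorial :=
    Nat.le_mul_of_pos_left _ (by omega)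
  omega

lemma norm_nat_factorial (b : ℕ) :
    ‖(b.factorial : ℚ_[p])‖ = (p : ℝ) ^ (-(padicValNat p b.factorial : ℤ)) := by
  set v := padicValNat p b.factorial with hv
  have hv' : v = (b.factorial).factorization p := (Nat.factorization_def _ hp.out).symm
  have hfac : b.factorial = p ^ v * (b.factorial / p ^ v) := by
    rw [hv']
    exact (Nat.ordProj_mul_ordCompl_eq_self _ p).symm
  set m := b.factorial / p ^ v with hm
  have hmd : ¬ p ∣ m := by
    rw [hm, hv']
    exact Nat.not_dvd_ordCompl hp.out b.factorial_ne_zero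
  have hnorm_m : ‖(m : ℚ_[p])‖ = 1 := by
    apply le_antisymm
    · exact_mod_cast Padic.norm_int_le_one (m : ℤ)
    · by_contra hlt
      push_neg at hlt
      have : ‖((m : ℤ) : ℚ_[p])‖ < 1 := by exact_mod_cast hlt
      rw [Padic.norm_intCast_lt_one_iff] at this
      exact hmd (by exact_mod_cast this)
  calc ‖(b.factorial : ℚ_[p])‖ = ‖((p : ℚ_[p]) ^ v) * (m : ℚ_[p])‖ := by
        congr 1
        rw [show (b.factorial : ℚ_[p]) = ((p ^ v * m : ℕ) : ℚ_[p]) from by rw [← hfac]]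
        push_cast
        ring
    _ = ‖(p : ℚ_[p])‖ ^ v * 1 := by rw [norm_mul, norm_pow, hnorm_m]
    _ = (p : ℝ) ^ (-(v : ℤ)) := by
        rw [Padic.norm_p, mul_one, inv_pow, ← zpow_natCast, ← zpow_neg]

lemma norm_term_le {b : ℕ} (hb : 1 ≤ b) :
    ‖algebraMap ℚ ℚ_[p] (1 / (b.factorial : ℚ)) * (algebraMap ℚ ℚ_[p] (p : ℚ)) ^ b‖
      ≤ ((p : ℝ))⁻¹ := by
  have hp1 : (1 : ℝ) ≤ (p : ℝ) := by
    have := hp.out.one_lt; exact_mod_cast this.le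
  have hp0 : (0 : ℝ) < (p : ℝ) := by positivity
  have hc1 : algebraMap ℚ ℚ_[p] (1 / (b.factorial : ℚ)) = ((b.factorial : ℚ_[p]))⁻¹ := by
    rw [eq_ratCast]
    push_cast
    rw [one_div]
  have hc2 : algebraMap ℚ ℚ_[p] (p : ℚ) = (p : ℚ_[p]) := by
    rw [eq_ratCast]; push_cast; rfl
  rw [hc1, hc2, norm_mul, norm_inv, norm_pow, norm_nat_factorial p, Padic.norm_p]
  set v := padicValNat p b.factorial
  have hvb : (v : ℤ) - b ≤ -1 := by
    have := padicValNat_factorial_succ_le p hb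
    omega
  calc ((p : ℝ) ^ (-(v : ℤ)))⁻¹ * ((p : ℝ)⁻¹) ^ b
      = (p : ℝ) ^ ((v : ℤ) - b) := by
        rw [← zpow_neg, neg_neg, inv_pow, ← zpow_natCast, ← zpow_neg, ← zpow_add₀ hp0.ne']
        ring_nf
    _ ≤ (p : ℝ) ^ (-1 : ℤ) := by
        exact zpow_le_zpow_right₀ hp1 hvb
    _ = ((p : ℝ))⁻¹ := by simp

end padic

section frob
variable (p : ℕ) [hp : Fact p.Prime]

instance charP_powerSeries {S : Type*} [CommRing S] [CharP S p] :
    CharP (PowerSeries S) p := by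
  constructor
  intro n
  rw [← map_natCast (C) n]
  constructor
  · intro h
    have := congrArg (constantCoeff) h
    rw [PowerSeries.constantCoeff_C, map_zero] at this
    exact (CharP.cast_eq_zero_iff S p n).mp this
  · intro h
    rw [(CharP.cast_eq_zero_iff S p n).mpr h, map_zero]

lemma norm_coeff_frobenius (n : ℕ) (b : ℕ → ℤ_[p]) (k : ℕ) :
    ‖coeff k ((∑ m ∈ range n, C (b m) * X ^ m) ^ p
      - ∑ m ∈ range n, C (b m) * X ^ (p * m))‖ ≤ ((p : ℝ))⁻¹ := by
  set D := (∑ m ∈ range n, C (b m) * X ^ m) ^ p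
      - ∑ m ∈ range n, C (b m) * X ^ (p * m) with hD
  have hmap : PowerSeries.map (PadicInt.toZMod (p := p)) D = 0 := by
    rw [hD, map_sub, map_pow, map_sum, map_sum]
    simp only [map_mul, PowerSeries.map_C, map_pow, PowerSeries.map_X]
    rw [sum_pow_char]
    rw [Finset.sum_congr rfl (fun m _ => by
      rw [mul_pow, ← map_pow, ZMod.pow_card, ← pow_mul, mul_comm m p])]
    exact sub_self _
  have hker : PadicInt.toZMod (coeff k D) = 0 := by
    have := congrArg (coeff k) hmap
    rwa [PowerSeries.coeff_map, map_zero] at this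
  have hmem : coeff k D ∈ Ideal.span {(p : ℤ_[p]) ^ 1} := by
    rw [pow_one, ← PadicInt.maximalIdeal_eq_span_p]
    rw [← PadicInt.ker_toZMod, RingHom.mem_ker]
    exact hker
  have := (PadicInt.norm_le_pow_iff_mem_span_pow _ 1).mpr hmem
  calc ‖coeff k D‖ ≤ (p : ℝ) ^ (-1 : ℤ) := this
    _ = ((p : ℝ))⁻¹ := by simp

lemma padic_norm_sum_le_of_le {ι : Type*} (s : Finset ι) (f : ι → ℚ_[p]) (c : ℝ) (hc : 0 ≤ c)
    (h : ∀ i ∈ s, ‖f i‖ ≤ c) : ‖∑ i ∈ s, f i‖ ≤ c := by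
  classical
  induction s using Finset.induction_on with
  | empty => simpa using hc
  | @insert a t hx ih =>
      rw [Finset.sum_insert hx]
      refine le_trans (Padic.nonarchimedean _ _) (max_le (h _ (Finset.mem_insert_self _ _))
        (ih (fun i hi => h i (Finset.mem_insert_of_mem hi))))

end frob


/-- The Artin–Hasse exponential series `E(t) = exp(∑_{i≥0} t^{p^i}/p^i)` has all of its
coefficients in the `p`-adic integers `ℤ_p`. -/
theorem artin_hasse_coeff_integral (p : ℕ) [Fact p.Prime] (n : ℕ) :
    ‖PowerSeries.coeff n (AH p ℚ_[p])‖ ≤ 1 := by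
  induction n using Nat.strong_induction_on with
  | _ n IH =>
  have hp1 : 1 < p := (Fact.out : p.Prime).one_lt
  have hp0 : 0 < p := by omega
  set a : ℕ → ℚ_[p] := fun m => coeff m (AH p ℚ_[p]) with ha
  show ‖a n‖ ≤ 1
  have ha0 : a 0 = 1 := by
    rw [ha]
    simp only []
    rw [PowerSeries.coeff_zero_eq_constantCoeff_apply, constantCoeff_AH_aux p hp1]
  rcases Nat.eq_zero_or_pos n with rfl | hn
  · rw [ha0, norm_one]
  set b : ℕ → ℤ_[p] := fun m => if h : m < n then ⟨a m, IH m h⟩ else 0 with hb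
  have hb_coe : ∀ m, m < n → ((b m : ℤ_[p]) : ℚ_[p]) = a m := by
    intro m h
    have e : b m = (⟨a m, IH m h⟩ : ℤ_[p]) := dif_pos h
    rw [e]
  set F' : PowerSeries ℤ_[p] := ∑ m ∈ range n, C (b m) * X ^ m with hF'
  set F : PowerSeries ℚ_[p] := PowerSeries.map (PadicInt.Coe.ringHom : ℤ_[p] →+* ℚ_[p]) F' with hF
  have hcoeffF' : ∀ m, coeff m F' = if m < n then b m else 0 := by
    intro m
    rw [hF', map_sum]
    simp only [coeff_C_mul, coeff_X_pow, mul_ite, mul_one, mul_zero]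
    rw [Finset.sum_ite_eq (range n) m b]
    simp only [Finset.mem_range]
  have hcoeffF : ∀ m, coeff m F = if m < n then a m else 0 := by
    intro m
    rw [hF, PowerSeries.coeff_map, hcoeffF' m]
    split_ifs with h
    · exact hb_coe m h
    · exact map_zero _
  have hconstF : constantCoeff F = 1 := by
    rw [← PowerSeries.coeff_zero_eq_constantCoeff_apply, hcoeffF 0, if_pos hn, ha0]
  set G : PowerSeries ℚ_[p] := AH p ℚ_[p] - F with hG
  have hGcoeff_lt : ∀ m, m < n → coeff m G = 0 := by
    intro m hm
    rw [hG, map_sub, hcoeffF m, if_pos hm]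
    exact sub_self _
  have hGn : coeff n G = a n := by
    rw [hG, map_sub, hcoeffF n, if_neg (lt_irrefl n), sub_zero]
  have hXG : (X : PowerSeries ℚ_[p]) ^ n ∣ G := X_pow_dvd_iff.mpr hGcoeff_lt
  -- (f2)
  have hsplit : coeff n ((AH p ℚ_[p]) ^ p)
      = coeff n (F ^ p) + (p : ℚ_[p]) * a n := by
    have hFG : AH p ℚ_[p] = G + F := by rw [hG]; ring
    rw [hFG, add_pow, map_sum, ← Finset.sum_range_add_sum_Ico _ (by omega : 2 ≤ p + 1)]
    have hIco : ∑ k ∈ Finset.Ico 2 (p + 1),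
        coeff n (G ^ k * F ^ (p - k) * ((p.choose k : ℕ) : PowerSeries ℚ_[p])) = 0 := by
      apply Finset.sum_eq_zero
      intro k hk
      have hk2 : 2 ≤ k := (Finset.mem_Ico.mp hk).1
      have hdvd : (X : PowerSeries ℚ_[p]) ^ (n + 1) ∣
          G ^ k * F ^ (p - k) * ((p.choose k : ℕ) : PowerSeries ℚ_[p]) := by
        refine dvd_mul_of_dvd_left (dvd_mul_of_dvd_left ?_ _) _
        calc (X : PowerSeries ℚ_[p]) ^ (n + 1) ∣ (X ^ n) ^ k := by
              rw [← pow_mul]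
              exact pow_dvd_pow X (by nlinarith)
          _ ∣ G ^ k := pow_dvd_pow_of_dvd hXG k
      exact (X_pow_dvd_iff.mp hdvd) n (by omega)
    rw [hIco, add_zero, Finset.sum_range_succ, Finset.sum_range_one]
    have h0 : coeff n (G ^ 0 * F ^ (p - 0) * ((p.choose 0 : ℕ) : PowerSeries ℚ_[p]))
        = coeff n (F ^ p) := by
      simp
    have h1 : coeff n (G ^ 1 * F ^ (p - 1) * ((p.choose 1 : ℕ) : PowerSeries ℚ_[p]))
        = (p : ℚ_[p]) * a n := by
      rw [pow_one, Nat.choose_one_right]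
      rw [show ((p : ℕ) : PowerSeries ℚ_[p]) = C ((p : ℕ) : ℚ_[p]) from
        (map_natCast (C) p).symm]
      rw [coeff_mul_C, PowerSeries.coeff_mul]
      rw [Finset.sum_eq_single_of_mem (n, 0) (Finset.HasAntidiagonal.mem_antidiagonal.mpr (add_zero n))]
      · rw [hGn, show ((n, 0) : ℕ × ℕ).2 = 0 from rfl,
          PowerSeries.coeff_zero_eq_constantCoeff_apply, map_pow, hconstF, one_pow, mul_one,
          mul_comm]
      · intro q hq hne
        have hqs := Finset.HasAntidiagonal.mem_antidiagonal.mp hq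
        have hlt : q.1 < n := by
          rcases Nat.lt_or_ge q.1 n with h | h
          · exact h
          · exfalso; apply hne
            have : q.1 = n := by omega
            have : q.2 = 0 := by omega
            exact Prod.ext (by omega) this
        rw [hGcoeff_lt q.1 hlt, zero_mul]
    rw [h0, h1]
  -- (f3) Frobenius congruence
  have hfrob : ‖coeff n (F ^ p) - (if p ∣ n then a (n / p) else 0)‖ ≤ ((p : ℝ))⁻¹ := by
    set H' : PowerSeries ℤ_[p] := ∑ m ∈ range n, C (b m) * X ^ (p * m) with hH'
    have h2 : coeff n H' = if p ∣ n then b (n / p) else 0 := by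
      rw [hH', map_sum]
      simp only [coeff_C_mul, coeff_X_pow, mul_ite, mul_one, mul_zero]
      by_cases hd : p ∣ n
      · obtain ⟨m0, hm0⟩ := hd
        have hm0lt : m0 < n := by nlinarith
        have hdiv : n / p = m0 := by rw [hm0, Nat.mul_div_cancel_left m0 hp0]
        rw [Finset.sum_eq_single_of_mem m0 (Finset.mem_range.mpr hm0lt)
          (fun i _ hne => by
            rw [if_neg (fun hni : n = p * i => hne (Nat.eq_of_mul_eq_mul_left hp0 (by omega)))])]
        rw [if_pos hm0, if_pos ⟨m0, hm0⟩, hdiv]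
      · rw [if_neg hd, Finset.sum_eq_zero]
        intro i _
        rw [if_neg (fun hni : n = p * i => hd ⟨i, hni⟩)]
    have h1 : coeff n (F ^ p) = ((coeff n (F' ^ p) : ℤ_[p]) : ℚ_[p]) := by
      rw [hF, ← map_pow, PowerSeries.coeff_map]
      rfl
    have hIf : (if p ∣ n then a (n / p) else 0)
        = (((if p ∣ n then b (n / p) else 0) : ℤ_[p]) : ℚ_[p]) := by
      split_ifs with hd
      · exact (hb_coe (n / p) (Nat.div_lt_self hn hp1)).symm
      · simp
    have hdiffeq : coeff n (F ^ p) - (if p ∣ n then a (n / p) else 0)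
        = ((coeff n (F' ^ p - H') : ℤ_[p]) : ℚ_[p]) := by
      rw [map_sub, h2, h1, hIf, PadicInt.coe_sub]
    rw [hdiffeq, PadicInt.padic_norm_e_of_padicInt]
    exact norm_coeff_frobenius p n b n
  -- (f4) sum splitting and bounds
  have hkey := coeff_AH_pow_p p hp1 (R := ℚ_[p]) n
  set T : ℕ × ℕ → ℚ_[p] := fun q => (if p ∣ q.1 then a (q.1 / p) else 0) *
      (algebraMap ℚ ℚ_[p] (1 / (q.2.factorial : ℚ)) * (algebraMap ℚ ℚ_[p] (p : ℚ)) ^ q.2) with hT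
  have hmem : ((n, 0) : ℕ × ℕ) ∈ Finset.HasAntidiagonal.antidiagonal n :=
    Finset.HasAntidiagonal.mem_antidiagonal.mpr (add_zero n)
  have hsum : coeff n ((AH p ℚ_[p]) ^ p)
      = T (n, 0) + ∑ q ∈ (Finset.HasAntidiagonal.antidiagonal n).erase (n, 0), T q := by
    rw [hkey]
    exact (Finset.add_sum_erase _ T hmem).symm
  have hT0 : T (n, 0) = (if p ∣ n then a (n / p) else 0) := by
    rw [hT]
    simp
  have hrest : ‖∑ q ∈ (Finset.HasAntidiagonal.antidiagonal n).erase (n, 0), T q‖ ≤ ((p : ℝ))⁻¹ := by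
    apply padic_norm_sum_le_of_le p _ _ _ (by positivity)
    intro q hq
    have hq' := Finset.mem_of_mem_erase hq
    have hqsum := Finset.HasAntidiagonal.mem_antidiagonal.mp hq'
    have hq2 : 1 ≤ q.2 := by
      rcases Nat.eq_zero_or_pos q.2 with h0 | h
      · exfalso
        exact Finset.ne_of_mem_erase hq (Prod.ext (by omega) h0)
      · exact h
    rw [hT, norm_mul]
    have hnorm1 : ‖(if p ∣ q.1 then a (q.1 / p) else 0)‖ ≤ 1 := by
      split_ifs with hd
      · apply IH
        calc q.1 / p ≤ n / p := Nat.div_le_div_right (by omega)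
          _ < n := Nat.div_lt_self hn hp1
      · simp
    calc ‖(if p ∣ q.1 then a (q.1 / p) else 0)‖ *
          ‖algebraMap ℚ ℚ_[p] (1 / (q.2.factorial : ℚ)) * (algebraMap ℚ ℚ_[p] (p : ℚ)) ^ q.2‖
        ≤ 1 * ((p : ℝ))⁻¹ :=
          mul_le_mul hnorm1 (norm_term_le p hq2) (norm_nonneg _) zero_le_one
      _ = ((p : ℝ))⁻¹ := one_mul _
  -- assemble
  have heq : (p : ℚ_[p]) * a n
      = ((if p ∣ n then a (n / p) else 0) - coeff n (F ^ p))
        + ∑ q ∈ (Finset.HasAntidiagonal.antidiagonal n).erase (n, 0), T q := by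
    rw [hT0] at hsum
    linear_combination hsum - hsplit
  have hnorm : ‖(p : ℚ_[p]) * a n‖ ≤ ((p : ℝ))⁻¹ := by
    rw [heq]
    refine le_trans (Padic.nonarchimedean _ _) (max_le ?_ hrest)
    calc ‖(if p ∣ n then a (n / p) else 0) - coeff n (F ^ p)‖
        = ‖coeff n (F ^ p) - (if p ∣ n then a (n / p) else 0)‖ := norm_sub_rev _ _
      _ ≤ ((p : ℝ))⁻¹ := hfrob
  rw [norm_mul, Padic.norm_p] at hnorm
  have hppos : (0 : ℝ) < ((p : ℝ))⁻¹ := by positivity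
  nlinarith [norm_nonneg (a n)]
end

section
/- Let Δ ⊂ Q^n be an n-dimensional convex polytope containing the origin, with degree function deg on L(Δ) (the integral points of the cone over Δ) and denominator D = D(Δ). Define W_Δ(k) = #{u ∈ L(Δ) : deg(u) = k/D} and h_Δ(k) by ∑_k h_Δ(k) t^k = (1−t)^n ∑_k W_Δ(k) t^k. Then for every integer j with 1 ≤ j ≤ n+1, (1/D)·∑_{k=0}^{jD} k·W_Δ(k) ≥ (j−1)·∑_{k=0}^{jD} W_Δ(k). -/
open Finset PowerSeries

/-- Hockey stick: `∑_{m=0}^{M} C(r+m, r) = C(M+r+1, r+1)`. -/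
lemma hs1 (r M : ℕ) : ∑ m ∈ range (M + 1), (r + m).choose r = (M + r + 1).choose (r + 1) := by
  induction M with
  | zero => simp
  | succ M ih =>
      rw [Finset.sum_range_succ, ih]
      have hp := Nat.choose_succ_succ' (M + r + 1) r
      rw [show r + (M + 1) = M + r + 1 by omega, show M + 1 + r + 1 = M + r + 1 + 1 by omega]
      omega

/-- Hockey stick, shifted: `∑_{m=0}^{M} C(r+m, r+1) = C(M+r+1, r+2)`. -/
lemma hs2 (r M : ℕ) : ∑ m ∈ range (M + 1), (r + m).choose (r + 1) = (M + r + 1).choose (r + 2) := by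
  induction M with
  | zero => simp [Nat.choose_eq_zero_of_lt]
  | succ M ih =>
      rw [Finset.sum_range_succ, ih]
      have hp : (M + r + 1 + 1).choose (r + 2)
          = (M + r + 1).choose (r + 1) + (M + r + 1).choose (r + 2) :=
        Nat.choose_succ_succ' (M + r + 1) (r + 1)
      rw [show r + (M + 1) = M + r + 1 by omega, show M + 1 + r + 1 = M + r + 1 + 1 by omega]
      omega

lemma weight_id (r m : ℕ) : m * (r + m).choose r = (r + 1) * (r + m).choose (r + 1) := by
  have := Nat.choose_succ_right_eq (r + m) r
  have h2 : r + m - r = m := by omega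
  rw [h2] at this
  rw [mul_comm, ← this, mul_comm]

/-- weighted hockey stick: `∑_{m=0}^{M} m * C(r+m, r) = (r+1) * C(M+r+1, r+2)`. -/
lemma hs3 (r M : ℕ) :
    ∑ m ∈ range (M + 1), m * (r + m).choose r = (r + 1) * (M + r + 1).choose (r + 2) := by
  rw [← hs2, Finset.mul_sum]
  exact Finset.sum_congr rfl fun m _ => weight_id r m

/-- Let `Δ ⊂ ℚ^n` be an `n`-dimensional polytope containing the origin, with degree function
`deg` on the lattice points `L(Δ)` of the cone over `Δ` and denominator `D = D(Δ)`.  Let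
`W(k) = #{u ∈ L(Δ) : deg u = k/D}` and define `h` by `∑ h(k)t^k = (1−t)^n ∑ W(k)t^k`; by
Kouchnirenko's lemma `h` is a polynomial of degree `≤ n` with nonnegative coefficients (assumed
here).  Then for every `1 ≤ j ≤ n+1`,
`(1/D)·∑_{k=0}^{jD} k·W(k) ≥ (j−1)·∑_{k=0}^{jD} W(k)`. -/
theorem hodge_polygon_weight_bound (n D : ℕ) (hn : 1 ≤ n) (hD : 1 ≤ D)
    (L : Set (Fin n → ℤ)) (deg : (Fin n → ℤ) → ℚ)
    (W : ℕ → ℕ) (h : ℕ → ℤ)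
    (hW : ∀ k : ℕ, W k = Nat.card {u : Fin n → ℤ // u ∈ L ∧ deg u = (k : ℚ) / D})
    (hrel : PowerSeries.mk (fun k => (h k : ℚ))
      = (1 - PowerSeries.X) ^ n * PowerSeries.mk fun k => (W k : ℚ))
    (hdeg : ∀ k : ℕ, n < k → h k = 0)
    (hpos : ∀ k : ℕ, 0 ≤ h k) :
    ∀ j : ℕ, 1 ≤ j → j ≤ n + 1 →
      ((j : ℚ) - 1) * ∑ k ∈ Finset.range (j * D + 1), (W k : ℚ)
        ≤ (1 / (D : ℚ)) * ∑ k ∈ Finset.range (j * D + 1), (k : ℚ) * (W k : ℚ) := by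
  intro j hj1 hj2
  -- Step 1: convolution formula for W.
  have hconv : ∀ k : ℕ, (W k : ℚ)
      = ∑ i ∈ range (k + 1), (h i : ℚ) * ((n - 1 + (k - i)).choose (n - 1) : ℚ) := by
    have h1 : ((1 - PowerSeries.X) ^ n : PowerSeries ℚ)
        * (PowerSeries.invOneSubPow ℚ n).val = 1 := by
      rw [← PowerSeries.invOneSubPow_inv_eq_one_sub_pow]
      exact (PowerSeries.invOneSubPow ℚ n).inv_val
    have hser : (PowerSeries.mk fun k => (W k : ℚ))
        = PowerSeries.mk (fun k => (h k : ℚ)) * (PowerSeries.invOneSubPow ℚ n).val := by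
      rw [hrel, mul_comm ((1 - PowerSeries.X) ^ n), mul_assoc, h1, mul_one]
    intro k
    have := congrArg (PowerSeries.coeff (R := ℚ) k) hser
    rw [PowerSeries.coeff_mk, PowerSeries.coeff_mul,
      PowerSeries.invOneSubPow_val_eq_mk_sub_one_add_choose_of_pos ℚ n hn,
      Finset.Nat.sum_antidiagonal_eq_sum_range_succ_mk] at this
    simpa using this
  set N := j * D with hN
  have hD0 : (0 : ℚ) < D := by exact_mod_cast hD
  -- Step 2: the key nonnegativity.
  have key : 0 ≤ ∑ k ∈ range (N + 1), ((k : ℚ) - D * (j - 1)) * (W k : ℚ) := by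
    have hrw : ∑ k ∈ range (N + 1), ((k : ℚ) - D * (j - 1)) * (W k : ℚ)
        = ∑ i ∈ range (N + 1), ∑ k ∈ Finset.Ico i (N + 1),
            ((k : ℚ) - D * (j - 1)) * ((h i : ℚ) * ((n - 1 + (k - i)).choose (n - 1) : ℚ)) := by
      have step1 : ∑ k ∈ range (N + 1), ((k : ℚ) - D * (j - 1)) * (W k : ℚ)
          = ∑ k ∈ range (N + 1), ∑ i ∈ range (k + 1),
              ((k : ℚ) - D * (j - 1)) * ((h i : ℚ) * ((n - 1 + (k - i)).choose (n - 1) : ℚ)) :=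
        Finset.sum_congr rfl fun k _ => by rw [hconv k, Finset.mul_sum]
      rw [step1]
      exact Finset.sum_comm' fun k i => by
        simp only [Finset.mem_range, Finset.mem_Ico]
        omega
    rw [hrw]
    apply Finset.sum_nonneg
    intro i hi
    rw [Finset.mem_range] at hi
    have hiN : i ≤ N := by omega
    -- change of variable k = i + m
    rw [Finset.sum_Ico_eq_sum_range]
    set M := N - i with hM
    have hNM : N + 1 - i = M + 1 := by omega
    rw [hNM]
    have hinner : ∑ m ∈ range (M + 1),
        (((i + m : ℕ) : ℚ) - D * (j - 1)) * ((h i : ℚ) * ((n - 1 + (i + m - i)).choose (n - 1) : ℚ))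
        = (h i : ℚ) * (((n : ℚ)) * ((M + n).choose (n + 1) : ℚ)
            + ((i : ℚ) - D * (j - 1)) * ((M + n).choose n : ℚ)) := by
      have e1 : ∀ m ∈ range (M + 1),
          (((i + m : ℕ) : ℚ) - D * (j - 1)) * ((h i : ℚ) * ((n - 1 + (i + m - i)).choose (n - 1) : ℚ))
          = (h i : ℚ) * ((m : ℚ) * ((n - 1 + m).choose (n - 1) : ℚ)
              + ((i : ℚ) - D * (j - 1)) * ((n - 1 + m).choose (n - 1) : ℚ)) := by
        intro m _
        rw [show i + m - i = m by omega]
        push_cast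
        ring
      rw [Finset.sum_congr rfl e1, ← Finset.mul_sum, Finset.sum_add_distrib, ← Finset.mul_sum]
      have c1 : ∑ m ∈ range (M + 1), ((n - 1 + m).choose (n - 1) : ℚ) = ((M + n).choose n : ℚ) := by
        have := hs1 (n - 1) M
        rw [show M + (n - 1) + 1 = M + n by omega, show n - 1 + 1 = n by omega] at this
        exact_mod_cast this
      have c2 : ∑ m ∈ range (M + 1), (m : ℚ) * ((n - 1 + m).choose (n - 1) : ℚ)
          = (n : ℚ) * ((M + n).choose (n + 1) : ℚ) := by
        have := hs3 (n - 1) M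
        rw [show M + (n - 1) + 1 = M + n by omega, show n - 1 + 1 = n by omega,
          show n - 1 + 2 = n + 1 by omega] at this
        exact_mod_cast this
      rw [c1, c2]
    rw [hinner]
    have hpi : (0 : ℚ) ≤ (h i : ℚ) := by exact_mod_cast hpos i
    apply mul_nonneg hpi
    -- remains: 0 ≤ n * C(M+n, n+1) + (i - D(j-1)) * C(M+n, n)
    have hrel2 : ((M + n).choose (n + 1) : ℚ) * (n + 1) = ((M + n).choose n : ℚ) * (M : ℚ) := by
      have := Nat.choose_succ_right_eq (M + n) n
      rw [show M + n - n = M by omega] at this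
      exact_mod_cast this
    have hMcast : (M : ℚ) = (j : ℚ) * D - i := by
      have : (M : ℚ) = (N : ℚ) - i := by
        rw [hM]; push_cast [Nat.cast_sub hiN]; ring
      rw [this, hN]; push_cast; ring
    have hc0 : (0 : ℚ) ≤ ((M + n).choose n : ℚ) := by positivity
    have hn1 : (0 : ℚ) < (n : ℚ) + 1 := by positivity
    have hjn : (j : ℚ) ≤ (n : ℚ) + 1 := by exact_mod_cast hj2
    have hi0 : (0 : ℚ) ≤ (i : ℚ) := by positivity
    have hfac : ((n : ℚ) * ((M + n).choose (n + 1) : ℚ)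
          + ((i : ℚ) - D * (j - 1)) * ((M + n).choose n : ℚ)) * ((n : ℚ) + 1)
        = ((M + n).choose n : ℚ) * ((i : ℚ) + D * ((n : ℚ) + 1 - j)) := by
      linear_combination (n : ℚ) * hrel2 + (n : ℚ) * ((M + n).choose n : ℚ) * hMcast
    have hrhs : (0 : ℚ) ≤ ((M + n).choose n : ℚ) * ((i : ℚ) + D * ((n : ℚ) + 1 - j)) := by
      apply mul_nonneg hc0
      have : (0 : ℚ) ≤ D * ((n : ℚ) + 1 - j) := mul_nonneg hD0.le (by linarith)
      linarith
    nlinarith [hfac, hrhs, hn1]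
  -- Step 3: conclude.
  have expand : ∑ k ∈ range (N + 1), ((k : ℚ) - D * (j - 1)) * (W k : ℚ)
      = (∑ k ∈ range (N + 1), (k : ℚ) * (W k : ℚ))
        - D * ((j : ℚ) - 1) * ∑ k ∈ range (N + 1), (W k : ℚ) := by
    rw [Finset.mul_sum, ← Finset.sum_sub_distrib]
    exact Finset.sum_congr rfl fun k _ => by ring
  rw [expand] at key
  rw [one_div_mul_eq_div, le_div_iff₀ hD0]
  calc ((j : ℚ) - 1) * (∑ k ∈ range (N + 1), (W k : ℚ)) * D
      = (D : ℚ) * ((j : ℚ) - 1) * ∑ k ∈ range (N + 1), (W k : ℚ) := by ring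
    _ ≤ ∑ k ∈ range (N + 1), (k : ℚ) * (W k : ℚ) := by linarith
end

section
/- Let W: N → N be given by W(i) = ∑_{k=0}^{⌊i/D⌋} h(i−Dk)·C(n−1+k, n−1) for a finitely supported function h: N → Z. Then for real x → ∞, ∑_{i ≤ Dx} (x − i/D)·W(i) = (∑_j h(j))·x^{n+1}/(n+1)! + (∑_j h(j)(n/2 − j/D))·x^n/n! + O(x^{n-1}). -/
open Filter
open Finset

-- choose as product
lemma choose_prod_nat (M k : ℕ) : (M + k).choose k * k.factorial = ∏ i ∈ range k, (M + 1 + i) := by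
  induction k with
  | zero => simp
  | succ k ih =>
    rw [prod_range_succ, ← ih, Nat.factorial_succ]
    have := Nat.add_one_mul_choose_eq (M + k) k
    calc (M + (k+1)).choose (k+1) * ((k+1) * k.factorial)
        = ((M + k + 1).choose (k+1) * (k+1)) * k.factorial := by ring_nf
      _ = ((M + k + 1) * (M + k).choose k) * k.factorial := by rw [← this]
      _ = (M + k).choose k * k.factorial * (M + 1 + k) := by ring

-- Abel-summed closed form
lemma abel_sum (m : ℕ) (y : ℝ) (M : ℕ) :
    ∑ k ∈ range (M + 1), (y - k) * ((m + k).choose m : ℝ)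
      = (y - M) * ((m + 1 + M).choose (m + 1) : ℝ) + ((m + 1 + M).choose (m + 2) : ℝ) := by
  induction M with
  | zero => simp
  | succ M ih =>
    rw [sum_range_succ, ih]
    have h1 : (m + 1 + (M + 1)) = (m + M + 1) + 1 := by ring
    have h2 : ((m + M + 1) + 1).choose (m + 1) = (m + M + 1).choose m + (m + M + 1).choose (m + 1) :=
      Nat.choose_succ_succ' _ _
    have h3 : ((m + M + 1) + 1).choose (m + 2) = (m + M + 1).choose (m+1) + (m + M + 1).choose (m + 2) :=
      Nat.choose_succ_succ' _ _
    have e1 : (m + 1 + M) = m + M + 1 := by ring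
    rw [h1, h2, h3, e1]
    push_cast
    ring

lemma prod_approx (k : ℕ) (B : ℝ) (hB : 0 ≤ B) :
    ∃ C : ℝ, 0 ≤ C ∧ ∀ b : ℕ → ℝ, (∀ i, i < k → |b i| ≤ B) → ∀ x : ℝ, 1 ≤ x →
      |(∏ i ∈ range k, (x + b i)) - (x ^ k + (∑ i ∈ range k, b i) * x ^ k / x)|
        ≤ C * x ^ k / x ^ 2 := by
  induction k with
  | zero =>
    refine ⟨0, le_refl 0, fun b hb x hx => ?_⟩
    have hx0 : x ≠ 0 := by linarith
    simp
  | succ k ih =>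
    obtain ⟨C, hC0, hC⟩ := ih
    refine ⟨C * (1 + B) + k * B ^ 2, by positivity, fun b hb x hx => ?_⟩
    have hx0 : (0:ℝ) < x := by linarith
    have hxne : x ≠ 0 := ne_of_gt hx0
    have hbk : |b k| ≤ B := hb k (Nat.lt_succ_self k)
    have hIH := hC b (fun i hi => hb i (Nat.lt_succ_of_lt hi)) x hx
    set s := ∑ i ∈ range k, b i with hs
    set P := ∏ i ∈ range k, (x + b i) with hP
    set E := P - (x ^ k + s * x ^ k / x) with hE
    have hsB : |s| ≤ k * B := by
      calc |s| ≤ ∑ i ∈ range k, |b i| := Finset.abs_sum_le_sum_abs _ _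
        _ ≤ ∑ i ∈ range k, B := Finset.sum_le_sum (fun i hi => hb i (Nat.lt_succ_of_lt (Finset.mem_range.mp hi)))
        _ = k * B := by simp [mul_comm]
    have key : (∏ i ∈ range (k+1), (x + b i))
        - (x ^ (k+1) + (∑ i ∈ range (k+1), b i) * x ^ (k+1) / x)
        = E * (x + b k) + s * b k * x ^ k / x := by
      rw [prod_range_succ, sum_range_succ, ← hP, ← hs, hE]
      field_simp
      ring
    rw [key]
    have h1 : |E * (x + b k)| ≤ (C * x ^ k / x ^ 2) * (x + B) := by
      rw [abs_mul]
      apply mul_le_mul hIH _ (abs_nonneg _) (by positivity)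
      calc |x + b k| ≤ |x| + |b k| := abs_add_le _ _
        _ ≤ x + B := by rw [abs_of_pos hx0]; linarith
    have h2 : |s * b k * x ^ k / x| ≤ k * B ^ 2 * x ^ k / x := by
      rw [abs_div, abs_mul, abs_mul]
      apply div_le_div₀ _ _ hx0 (le_of_eq (abs_of_pos hx0).symm)
      · positivity
      · have : |x ^ k| = x ^ k := abs_of_pos (by positivity)
        rw [this]
        apply mul_le_mul _ le_rfl (by positivity) (by positivity)
        calc |s| * |b k| ≤ (k * B) * B := mul_le_mul hsB hbk (abs_nonneg _) (by positivity)
          _ = k * B ^ 2 := by ring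
    calc |E * (x + b k) + s * b k * x ^ k / x|
        ≤ |E * (x + b k)| + |s * b k * x ^ k / x| := abs_add_le _ _
      _ ≤ (C * x ^ k / x ^ 2) * (x + B) + k * B ^ 2 * x ^ k / x := add_le_add h1 h2
      _ ≤ (C * (1 + B) + k * B ^ 2) * x ^ (k+1) / x ^ 2 := by
          have hxk : x ^ k ≤ x ^ (k+1) := by
            calc x ^ k = x ^ k * 1 := (mul_one _).symm
              _ ≤ x ^ k * x := by
                  apply mul_le_mul_of_nonneg_left hx (by positivity)
              _ = x ^ (k+1) := (pow_succ x k).symm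
          have e1 : (k:ℝ) * B ^ 2 * x ^ k / x = (k:ℝ) * B ^ 2 * x ^ (k+1) / x ^ 2 := by
            field_simp
            ring
          have e2 : C * x ^ k / x ^ 2 * (x + B) = (C * x ^ (k+1) + C * B * x ^ k) / x ^ 2 := by
            field_simp
            ring
          rw [e1, e2, ← add_div]
          apply div_le_div_of_nonneg_right ?_ (by positivity)
          nlinarith [mul_nonneg hC0 hB, mul_nonneg (mul_nonneg (Nat.cast_nonneg k) (mul_nonneg hB hB)) (le_of_lt hx0)]

set_option maxHeartbeats 1600000 in
lemma key_estimate (m : ℕ) (c : ℝ) (hc : 0 ≤ c) :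
    ∃ C : ℝ, 0 ≤ C ∧ ∀ x : ℝ, c + 1 ≤ x →
      |(∑ k ∈ range (⌊x - c⌋₊ + 1), ((x - c) - k) * ((m + k).choose m : ℝ))
        - (x ^ (m+2) / ((m+2).factorial : ℝ)
            + ((m+1:ℝ)/2 - c) * x ^ (m+1) / ((m+1).factorial : ℝ))|
      ≤ C * x ^ m := by
  obtain ⟨C₁, hC₁0, hC₁⟩ := prod_approx (m+1) ((m+2:ℝ) + c) (by positivity)
  obtain ⟨C₂, hC₂0, hC₂⟩ := prod_approx (m+2) ((m+2:ℝ) + c) (by positivity)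
  set F₁ : ℝ := ((m+1).factorial : ℝ) with hF₁
  set F₂ : ℝ := ((m+2).factorial : ℝ) with hF₂
  have hF₁pos : 0 < F₁ := by positivity
  have hF₂pos : 0 < F₂ := by positivity
  have hF₂eq : F₂ = (m+2) * F₁ := by
    rw [hF₁, hF₂]
    push_cast [Nat.factorial_succ (m+1)]
    ring
  set K : ℝ := (m+1)*(m+2)/2 + (m+1)*(c+1) with hK
  have hK0 : 0 ≤ K := by positivity
  refine ⟨C₁/F₁ + C₂/F₂ + K/F₁, by positivity, fun x hx => ?_⟩
  have hx1 : (1:ℝ) ≤ x := by linarith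
  have hx0 : (0:ℝ) < x := by linarith
  have hxne : x ≠ 0 := ne_of_gt hx0
  set y : ℝ := x - c with hy
  have hy1 : (1:ℝ) ≤ y := by rw [hy]; linarith
  have hy0 : (0:ℝ) ≤ y := by linarith
  obtain ⟨M, hMfloor⟩ : ∃ M : ℕ, ⌊y⌋₊ = M := ⟨⌊y⌋₊, rfl⟩
  rw [hMfloor]
  set θ : ℝ := y - M with hθ
  have hθ0 : 0 ≤ θ := by
    rw [hθ, ← hMfloor]
    have := Nat.floor_le hy0
    linarith
  have hθ1 : θ < 1 := by
    rw [hθ, ← hMfloor]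
    have := Nat.lt_floor_add_one y
    linarith
  have hMx : (M:ℝ) = x - c - θ := by rw [hθ]; ring
  have hyM : y - (M:ℝ) = θ := by rw [hθ]
  clear_value θ
  clear_value y
  rw [abel_sum m y M]
  set b₁ : ℕ → ℝ := fun i => (i:ℝ) + 1 - c - θ with hb₁
  set b₂ : ℕ → ℝ := fun i => (i:ℝ) - c - θ with hb₂
  have hprod1 : ((m + 1 + M).choose (m + 1) : ℝ) * F₁ = ∏ i ∈ range (m+1), (x + b₁ i) := by
    have hcast : ((M + (m+1)).choose (m+1) : ℝ) * F₁ = ∏ i ∈ range (m+1), ((M:ℝ) + 1 + i) := by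
      rw [hF₁]
      exact_mod_cast congrArg (Nat.cast : ℕ → ℝ) (choose_prod_nat M (m+1))
    rw [show m + 1 + M = M + (m+1) by ring, hcast]
    apply Finset.prod_congr rfl
    intro i _
    rw [hMx, hb₁]
    ring
  have hprod2 : ((m + 1 + M).choose (m + 2) : ℝ) * F₂ = ∏ i ∈ range (m+2), (x + b₂ i) := by
    cases M with
    | zero =>
      have h0 : (m + 1 + 0).choose (m + 2) = 0 := Nat.choose_eq_zero_of_lt (by omega)
      rw [h0]
      have hMx0 : (0:ℝ) = x - c - θ := by exact_mod_cast hMx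
      have hz : x + b₂ 0 = 0 := by
        rw [hb₂]
        push_cast
        linarith
      rw [Finset.prod_eq_zero (Finset.mem_range.mpr (by omega : 0 < m + 2)) hz]
      simp
    | succ M' =>
      have hcast : ((M' + (m+2)).choose (m+2) : ℝ) * F₂ = ∏ i ∈ range (m+2), ((M':ℝ) + 1 + i) := by
        rw [hF₂]
        exact_mod_cast congrArg (Nat.cast : ℕ → ℝ) (choose_prod_nat M' (m+2))
      rw [show m + 1 + (M' + 1) = M' + (m+2) by ring, hcast]
      apply Finset.prod_congr rfl
      intro i _
      have hMx' : ((M':ℝ) + 1) = x - c - θ := by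
        have : (((M' + 1 : ℕ)):ℝ) = x - c - θ := hMx
        push_cast at this
        linarith
      rw [hb₂]
      push_cast
      linarith
  -- bounds on offsets
  have hb₁bd : ∀ i, i < m + 1 → |b₁ i| ≤ (m+2:ℝ) + c := by
    intro i hi
    have hi' : (i:ℝ) ≤ m := by exact_mod_cast Nat.lt_succ_iff.mp hi
    simp only [hb₁, abs_le]
    have h0i : (0:ℝ) ≤ i := Nat.cast_nonneg i
    have h0m : (0:ℝ) ≤ m := Nat.cast_nonneg m
    constructor <;> linarith
  have hb₂bd : ∀ i, i < m + 2 → |b₂ i| ≤ (m+2:ℝ) + c := by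
    intro i hi
    have hi' : (i:ℝ) ≤ m + 1 := by exact_mod_cast Nat.lt_succ_iff.mp hi
    simp only [hb₂, abs_le]
    have h0i : (0:ℝ) ≤ i := Nat.cast_nonneg i
    have h0m : (0:ℝ) ≤ m := Nat.cast_nonneg m
    constructor <;> linarith
  have hE₁ := hC₁ b₁ hb₁bd x hx1
  have hE₂ := hC₂ b₂ hb₂bd x hx1
  set s₁ : ℝ := ∑ i ∈ range (m+1), b₁ i with hs₁
  set s₂ : ℝ := ∑ i ∈ range (m+2), b₂ i with hs₂
  -- closed forms of s₁, s₂
  have g1 : (∑ i ∈ range (m+1), (i:ℝ)) * 2 = (m+1) * m := by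
    have h' : (∑ i ∈ range (m+1), i) * 2 = (m+1) * m := by
      simpa using Finset.sum_range_id_mul_two (m+1)
    have h2 := congrArg (Nat.cast : ℕ → ℝ) h'
    push_cast at h2
    exact h2
  have g2 : (∑ i ∈ range (m+2), (i:ℝ)) * 2 = (m+2) * (m+1) := by
    have h' : (∑ i ∈ range (m+2), i) * 2 = (m+2) * (m+1) := by
      simpa using Finset.sum_range_id_mul_two (m+2)
    have h2 := congrArg (Nat.cast : ℕ → ℝ) h'
    push_cast at h2
    exact h2
  have hs₁v : s₁ = (m+1)*(m+2)/2 - (m+1)*(c+θ) := by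
    rw [hs₁, hb₁]
    have g := g1
    rw [Finset.sum_sub_distrib, Finset.sum_sub_distrib, Finset.sum_add_distrib]
    simp only [Finset.sum_const, Finset.card_range, nsmul_eq_mul]
    push_cast
    linarith [g]
  have hs₂v : s₂ = (m+1)*(m+2)/2 - (m+2)*(c+θ) := by
    rw [hs₂, hb₂]
    have g := g2
    rw [Finset.sum_sub_distrib, Finset.sum_sub_distrib]
    simp only [Finset.sum_const, Finset.card_range, nsmul_eq_mul]
    push_cast
    linarith [g]
  -- abbreviations for errors
  set E₁ : ℝ := (∏ i ∈ range (m+1), (x + b₁ i)) - (x ^ (m+1) + s₁ * x ^ (m+1) / x) with hE₁d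
  set E₂ : ℝ := (∏ i ∈ range (m+2), (x + b₂ i)) - (x ^ (m+2) + s₂ * x ^ (m+2) / x) with hE₂d
  have hQ₁ : ((m + 1 + M).choose (m + 1) : ℝ) = (x ^ (m+1) + s₁ * x ^ (m+1) / x + E₁) / F₁ := by
    rw [eq_div_iff (ne_of_gt hF₁pos), hprod1, hE₁d]
    ring
  have hQ₂ : ((m + 1 + M).choose (m + 2) : ℝ) = (x ^ (m+2) + s₂ * x ^ (m+2) / x + E₂) / F₂ := by
    rw [eq_div_iff (ne_of_gt hF₂pos), hprod2, hE₂d]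
    ring
  rw [hyM, hQ₁, hQ₂]
  -- the main algebraic identity
  have main_id : θ * ((x ^ (m+1) + s₁ * x ^ (m+1) / x + E₁) / F₁)
      + (x ^ (m+2) + s₂ * x ^ (m+2) / x + E₂) / F₂
      - (x ^ (m+2) / F₂ + ((m+1:ℝ)/2 - c) * x ^ (m+1) / F₁)
      = θ * E₁ / F₁ + E₂ / F₂ + θ * s₁ * x ^ (m+1) / (x * F₁) := by
    rw [hs₂v, hF₂eq]
    have hpow : x ^ (m+2) = x ^ (m+1) * x := pow_succ x (m+1)
    field_simp
    ring
  rw [main_id]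
  -- bound the three pieces
  have hxp1 : x ^ (m+1) / x ^ 2 ≤ x ^ m := by
    rw [div_le_iff₀ (by positivity)]
    have e : x ^ (m+1) = x ^ m * x := pow_succ x m
    have e2 : x ^ m * x ≤ x ^ m * x ^ 2 := by
      apply mul_le_mul_of_nonneg_left _ (by positivity)
      nlinarith
    linarith
  have hxp2 : x ^ (m+2) / x ^ 2 = x ^ m := by
    field_simp
    ring
  have hxp3 : x ^ (m+1) / x = x ^ m := by
    field_simp
    ring
  clear_value s₁ s₂ E₁ E₂ F₁ F₂ K
  have hs₁bd : |s₁| ≤ K := by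
    rw [hs₁v, hK, abs_le]
    have hm1 : (0:ℝ) ≤ m + 1 := by positivity
    have h1 : (m+1:ℝ)*(c+θ) ≤ (m+1)*(c+1) := mul_le_mul_of_nonneg_left (by linarith) hm1
    have h2 : (0:ℝ) ≤ (m+1:ℝ)*(c+θ) := mul_nonneg hm1 (by linarith)
    have h3 : (0:ℝ) ≤ (m+1:ℝ)*(c+1) := mul_nonneg hm1 (by linarith)
    have h4 : (0:ℝ) ≤ (m+1:ℝ)*(m+2)/2 := by positivity
    constructor <;> linarith
  have hθabs : |θ| ≤ 1 := by rw [abs_le]; constructor <;> linarith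
  have p1 : |θ * E₁ / F₁| ≤ C₁ / F₁ * x ^ m := by
    rw [abs_div, abs_mul, abs_of_pos hF₁pos, div_le_iff₀ hF₁pos]
    calc |θ| * |E₁| ≤ 1 * (C₁ * x ^ (m+1) / x ^ 2) :=
          mul_le_mul hθabs hE₁ (abs_nonneg _) zero_le_one
      _ = C₁ * (x ^ (m+1) / x ^ 2) := by ring
      _ ≤ C₁ * x ^ m := mul_le_mul_of_nonneg_left hxp1 hC₁0
      _ = C₁ / F₁ * x ^ m * F₁ := by field_simp
  have p2 : |E₂ / F₂| ≤ C₂ / F₂ * x ^ m := by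
    rw [abs_div, abs_of_pos hF₂pos, div_le_iff₀ hF₂pos]
    calc |E₂| ≤ C₂ * x ^ (m+2) / x ^ 2 := hE₂
      _ = C₂ * (x ^ (m+2) / x ^ 2) := by ring
      _ = C₂ * x ^ m := by rw [hxp2]
      _ = C₂ / F₂ * x ^ m * F₂ := by field_simp
  have p3 : |θ * s₁ * x ^ (m+1) / (x * F₁)| ≤ K / F₁ * x ^ m := by
    rw [abs_div, abs_mul, abs_mul]
    have hden : |x * F₁| = x * F₁ := abs_of_pos (by positivity)
    rw [hden, abs_of_pos (by positivity : (0:ℝ) < x ^ (m+1)), div_le_iff₀ (by positivity)]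
    calc |θ| * |s₁| * x ^ (m+1) ≤ 1 * K * x ^ (m+1) := by
          apply mul_le_mul_of_nonneg_right _ (by positivity)
          exact mul_le_mul hθabs hs₁bd (abs_nonneg _) zero_le_one
      _ = K * x ^ (m+1) := by ring
      _ = K / F₁ * x ^ m * (x * F₁) := by
          rw [pow_succ]
          field_simp
  calc |θ * E₁ / F₁ + E₂ / F₂ + θ * s₁ * x ^ (m+1) / (x * F₁)|
      ≤ |θ * E₁ / F₁ + E₂ / F₂| + |θ * s₁ * x ^ (m+1) / (x * F₁)| := abs_add_le _ _
    _ ≤ (|θ * E₁ / F₁| + |E₂ / F₂|) + |θ * s₁ * x ^ (m+1) / (x * F₁)| :=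
        add_le_add_left (abs_add_le _ _) _
    _ ≤ (C₁ / F₁ * x ^ m + C₂ / F₂ * x ^ m) + K / F₁ * x ^ m :=
        add_le_add (add_le_add p1 p2) p3
    _ = (C₁ / F₁ + C₂ / F₂ + K / F₁) * x ^ m := by ring

lemma reindex (m D N : ℕ) (hD : 1 ≤ D) (h : ℕ → ℤ)
    (hN : ∀ j, N ≤ j → h j = 0) (W : ℕ → ℤ)
    (hW : ∀ i : ℕ, W i = ∑ k ∈ range (i / D + 1), h (i - D * k) * ((m + k).choose m : ℤ))
    (x : ℝ) (hx : (N:ℝ) ≤ x) (hx0 : 0 ≤ x) :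
    ∑ i ∈ range (⌊(D:ℝ) * x⌋₊ + 1), (x - (i:ℝ)/D) * (W i : ℝ)
      = ∑ j ∈ range N, (h j : ℝ) *
          ∑ k ∈ range (⌊x - (j:ℝ)/D⌋₊ + 1), ((x - (j:ℝ)/D) - k) * ((m + k).choose m : ℝ) := by
  have hD0 : 0 < D := hD
  have hDR : (0:ℝ) < D := by exact_mod_cast hD0
  have hDne : (D:ℝ) ≠ 0 := ne_of_gt hDR
  set I := ⌊(D:ℝ) * x⌋₊ with hI
  have hIN : N ≤ I := by
    rw [hI]
    apply Nat.le_floor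
    calc (N:ℝ) ≤ x := hx
      _ = 1 * x := (one_mul x).symm
      _ ≤ (D:ℝ) * x := by
          apply mul_le_mul_of_nonneg_right _ hx0
          exact_mod_cast hD
  calc ∑ i ∈ range (I + 1), (x - (i:ℝ)/D) * (W i : ℝ)
      = ∑ i ∈ range (I+1), ∑ k ∈ range (i/D+1),
          (x - (i:ℝ)/D) * ((h (i - D*k) : ℝ) * (((m+k).choose m : ℕ) : ℝ)) := by
        apply Finset.sum_congr rfl
        intro i _
        rw [hW i]
        push_cast
        rw [Finset.mul_sum]
    _ = ∑ p ∈ (range (I+1)).sigma (fun i => range (i/D+1)),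
          (x - (p.1:ℝ)/D) * ((h (p.1 - D*p.2) : ℝ) * (((m+p.2).choose m : ℕ) : ℝ)) := by
        rw [Finset.sum_sigma]
    _ = ∑ p ∈ (range (I+1)).sigma (fun j => range ((I-j)/D+1)),
          (x - (((p.1 + D*p.2 : ℕ)):ℝ)/D) * ((h p.1 : ℝ) * (((m+p.2).choose m : ℕ) : ℝ)) := by
        apply Finset.sum_nbij' (i := fun p => (⟨p.1 - D*p.2, p.2⟩ : Σ _ : ℕ, ℕ))
          (j := fun p => (⟨p.1 + D*p.2, p.2⟩ : Σ _ : ℕ, ℕ))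
        · rintro ⟨a, k⟩ hp
          simp only [Finset.mem_sigma, Finset.mem_range, Nat.lt_succ_iff,
            Nat.le_div_iff_mul_le hD0] at hp ⊢
          have hcomm : k * D = D * k := Nat.mul_comm _ _
          omega
        · rintro ⟨a, k⟩ hp
          simp only [Finset.mem_sigma, Finset.mem_range, Nat.lt_succ_iff,
            Nat.le_div_iff_mul_le hD0] at hp ⊢
          have hcomm : k * D = D * k := Nat.mul_comm _ _
          omega
        · rintro ⟨a, k⟩ hp
          simp only [Finset.mem_sigma, Finset.mem_range, Nat.lt_succ_iff,
            Nat.le_div_iff_mul_le hD0] at hp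
          have hcomm : k * D = D * k := Nat.mul_comm _ _
          simp only [Sigma.mk.inj_iff, heq_eq_eq, and_true]
          omega
        · rintro ⟨a, k⟩ hp
          simp only [Sigma.mk.inj_iff, heq_eq_eq, and_true]
          omega
        · rintro ⟨a, k⟩ hp
          simp only [Finset.mem_sigma, Finset.mem_range, Nat.lt_succ_iff,
            Nat.le_div_iff_mul_le hD0] at hp
          have hcomm : k * D = D * k := Nat.mul_comm _ _
          have hle : D * k ≤ a := by omega
          have hre : a - D * k + D * k = a := Nat.sub_add_cancel hle
          dsimp only
          rw [hre]
    _ = ∑ j ∈ range (I+1), ∑ k ∈ range ((I-j)/D+1),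
          (x - (((j + D*k : ℕ)):ℝ)/D) * ((h j : ℝ) * (((m+k).choose m : ℕ) : ℝ)) := by
        rw [Finset.sum_sigma]
    _ = ∑ j ∈ range N, ∑ k ∈ range ((I-j)/D+1),
          (x - (((j + D*k : ℕ)):ℝ)/D) * ((h j : ℝ) * (((m+k).choose m : ℕ) : ℝ)) := by
        symm
        apply Finset.sum_subset
        · exact Finset.range_subset_range.mpr (by omega)
        · intro j _ hj
          have : h j = 0 := hN j (by simpa using Nat.le_of_not_lt (fun hlt => hj (Finset.mem_range.mpr hlt)))
          simp [this]
    _ = ∑ j ∈ range N, (h j : ℝ) *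
          ∑ k ∈ range (⌊x - (j:ℝ)/D⌋₊ + 1), ((x - (j:ℝ)/D) - k) * ((m + k).choose m : ℝ) := by
        apply Finset.sum_congr rfl
        intro j hj
        have hfloor : (I - j)/D = ⌊x - (j:ℝ)/D⌋₊ := by
          have e1 : x - (j:ℝ)/D = ((D:ℝ)*x - j)/D := by
            field_simp
          rw [e1, Nat.floor_div_natCast, Nat.floor_sub_natCast, hI]
        rw [← hfloor, Finset.mul_sum]
        apply Finset.sum_congr rfl
        intro k _
        have e2 : (((j + D*k : ℕ)):ℝ)/D = (j:ℝ)/D + k := by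
          push_cast
          field_simp
        rw [e2]
        ring

/-- Let `W(i) = ∑_{k=0}^{⌊i/D⌋} h(i−Dk)·C(n−1+k, n−1)` for a finitely supported `h : ℕ → ℤ`.
Then, as `x → ∞`,
`∑_{i ≤ Dx} (x − i/D)·W(i) = (∑_j h(j))·x^{n+1}/(n+1)! + (∑_j h(j)(n/2 − j/D))·x^n/n! + O(x^{n−1})`. -/
theorem weighted_lattice_sum_asymptotic (n D : ℕ) (hn : 1 ≤ n) (hD : 1 ≤ D)
    (h : ℕ → ℤ) (hfin : ∃ N : ℕ, ∀ j : ℕ, N ≤ j → h j = 0)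
    (W : ℕ → ℤ)
    (hW : ∀ i : ℕ, W i = ∑ k ∈ Finset.range (i / D + 1),
        h (i - D * k) * (Nat.choose (n - 1 + k) (n - 1) : ℤ)) :
    (fun x : ℝ =>
        (∑ i ∈ Finset.range (Nat.floor ((D : ℝ) * x) + 1), (x - (i : ℝ) / D) * (W i : ℝ))
          - ((∑' j : ℕ, (h j : ℝ)) * x ^ (n + 1) / ((n + 1).factorial : ℝ)
            + (∑' j : ℕ, (h j : ℝ) * ((n : ℝ) / 2 - (j : ℝ) / D)) * x ^ n / (n.factorial : ℝ)))
      =O[atTop] fun x : ℝ => x ^ (n - 1) := by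
  obtain ⟨m, rfl⟩ : ∃ m, n = m + 1 := ⟨n - 1, (Nat.succ_pred_eq_of_pos hn).symm⟩
  simp only [Nat.add_sub_cancel] at hW ⊢
  obtain ⟨N, hN⟩ := hfin
  have hDR : (0:ℝ) < D := by exact_mod_cast hD
  -- tsum values
  have t1 : (∑' j : ℕ, (h j : ℝ)) = ∑ j ∈ range N, (h j : ℝ) := by
    apply tsum_eq_sum
    intro j hj
    rw [hN j (by simpa using Nat.le_of_not_lt (fun hlt => hj (Finset.mem_range.mpr hlt)))]
    simp
  have t2 : (∑' j : ℕ, (h j : ℝ) * (((m+1:ℕ) : ℝ) / 2 - (j : ℝ) / D))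
      = ∑ j ∈ range N, (h j : ℝ) * (((m+1:ℕ) : ℝ) / 2 - (j : ℝ) / D) := by
    apply tsum_eq_sum
    intro j hj
    rw [hN j (by simpa using Nat.le_of_not_lt (fun hlt => hj (Finset.mem_range.mpr hlt)))]
    simp
  -- the per-j difference functions
  set G : ℕ → ℝ → ℝ := fun j x => (h j : ℝ) *
      ((∑ k ∈ range (⌊x - (j:ℝ)/D⌋₊ + 1), ((x - (j:ℝ)/D) - k) * ((m + k).choose m : ℝ))
        - (x ^ (m+2) / ((m+2).factorial : ℝ)
            + ((m+1:ℝ)/2 - (j:ℝ)/D) * x ^ (m+1) / ((m+1).factorial : ℝ))) with hG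
  have hsum : (fun x : ℝ => ∑ j ∈ range N, G j x) =O[atTop] fun x : ℝ => x ^ m := by
    apply Asymptotics.IsBigO.fun_sum
    intro j _
    obtain ⟨C, hC0, hC⟩ := key_estimate m ((j:ℝ)/D) (by positivity)
    rw [Asymptotics.isBigO_iff]
    refine ⟨|(h j : ℝ)| * C, ?_⟩
    filter_upwards [eventually_ge_atTop ((j:ℝ)/D + 1), eventually_ge_atTop (0:ℝ)] with x hx hx0
    rw [hG]
    simp only [Real.norm_eq_abs, abs_mul]
    rw [mul_assoc]
    apply mul_le_mul_of_nonneg_left _ (abs_nonneg _)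
    calc |_| ≤ C * x ^ m := hC x hx
      _ ≤ C * |x ^ m| := by
          apply mul_le_mul_of_nonneg_left (le_abs_self _) hC0
  -- eventual equality
  have heq : (fun x : ℝ =>
        (∑ i ∈ Finset.range (⌊(D : ℝ) * x⌋₊ + 1), (x - (i : ℝ) / D) * (W i : ℝ))
          - ((∑' j : ℕ, (h j : ℝ)) * x ^ (m + 1 + 1) / ((m + 1 + 1).factorial : ℝ)
            + (∑' j : ℕ, (h j : ℝ) * (((m+1:ℕ) : ℝ) / 2 - (j : ℝ) / D)) * x ^ (m+1) / ((m+1).factorial : ℝ)))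
      =ᶠ[atTop] (fun x : ℝ => ∑ j ∈ range N, G j x) := by
    filter_upwards [eventually_ge_atTop ((N:ℝ)), eventually_ge_atTop (0:ℝ)] with x hx hx0
    rw [reindex m D N hD h hN W hW x hx hx0, t1, t2, hG]
    rw [mul_div_assoc, mul_div_assoc, Finset.sum_mul, Finset.sum_mul,
      ← Finset.sum_add_distrib, ← Finset.sum_sub_distrib]
    apply Finset.sum_congr rfl
    intro j _
    push_cast
    ring
  exact hsum.congr' heq.symm EventuallyEq.rfl
end
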